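/- Let n be a positive integer and let L = {0,1}^n. If a bipartite graph G = (L ∪ R, E) satisfies |E| ≥ 2^n·|R|·2^{−δn} for some δ < 0.1 with n sufficiently large, then there exist ℓ, ℓ' ∈ {0,1}^n with Hamming distance d_H(ℓ, ℓ') ≥ 0.1n such that |N(ℓ) ∩ N(ℓ')| ≥ |R|·2^{−2δn−2}. -/

import Mathlib

open Finset

lemma sum_half_pow (n : ℕ) :
    ∑ s : Finset (Fin n), ((1:ℝ)/2) ^ s.card = (3/2) ^ n := by
  have h := Finset.prod_add (fun _ : Fin n => (1:ℝ)/2) (fun _ => 1) univ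
  simp only [Finset.prod_const, one_pow, mul_one, Finset.powerset_univ, Finset.card_univ,
    Fintype.card_fin] at h
  rw [← h]
  norm_num

lemma ball_bound (n : ℕ) (ℓ : Fin n → Bool) :
    (((univ.filter fun ℓ' : Fin n → Bool =>
        ¬ ((0.1:ℝ) * n ≤ (hammingDist ℓ ℓ' : ℝ))).card : ℝ)) ≤
      (2:ℝ) ^ ((0.1:ℝ) * n) * (3/2) ^ n := by
  set B := univ.filter fun ℓ' : Fin n → Bool => ¬ ((0.1:ℝ) * n ≤ (hammingDist ℓ ℓ' : ℝ)) with hB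
  set C := univ.filter fun s : Finset (Fin n) => ((s.card : ℝ) ≤ 0.1 * n) with hC
  have h1 : B.card ≤ C.card := by
    apply Finset.card_le_card_of_injOn (fun ℓ' => univ.filter fun i => ℓ i ≠ ℓ' i)
    · intro ℓ' hℓ'
      simp only [hB, Finset.mem_coe, mem_filter, mem_univ, true_and, not_le] at hℓ'
      simp only [hC, Finset.mem_coe, mem_filter, mem_univ, true_and]
      have : (univ.filter fun i => ℓ i ≠ ℓ' i).card = hammingDist ℓ ℓ' := rfl
      rw [this]
      linarith
    · intro a _ b _ hab
      funext i
      have h2 := Finset.ext_iff.mp hab i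
      simp only [mem_filter, mem_univ, true_and] at h2
      cases hℓ : ℓ i <;> cases ha : a i <;> cases hb : b i <;> simp_all
  have h2 : (C.card : ℝ) ≤ (2:ℝ) ^ ((0.1:ℝ) * n) * (3/2) ^ n := by
    rw [Finset.card_eq_sum_ones C]
    push_cast
    calc (∑ _s ∈ C, (1:ℝ)) ≤ ∑ s ∈ C, (2:ℝ) ^ ((0.1:ℝ) * n) * ((1:ℝ)/2) ^ s.card := by
          apply Finset.sum_le_sum
          intro s hs
          simp only [hC, mem_filter, mem_univ, true_and] at hs
          rw [one_div, inv_pow, ← div_eq_mul_inv, le_div_iff₀ (by positivity), one_mul]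
          calc ((2:ℝ)) ^ s.card = (2:ℝ) ^ ((s.card : ℝ)) := by
                rw [Real.rpow_natCast]
            _ ≤ (2:ℝ) ^ ((0.1:ℝ) * n) :=
                Real.rpow_le_rpow_of_exponent_le one_le_two hs
      _ ≤ ∑ s : Finset (Fin n), (2:ℝ) ^ ((0.1:ℝ) * n) * ((1:ℝ)/2) ^ s.card := by
          apply Finset.sum_le_sum_of_subset_of_nonneg (Finset.subset_univ C)
          intro s _ _
          positivity
      _ = (2:ℝ) ^ ((0.1:ℝ) * n) * (3/2) ^ n := by
          rw [← Finset.mul_sum, sum_half_pow]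
  calc (B.card : ℝ) ≤ (C.card : ℝ) := by exact_mod_cast h1
    _ ≤ _ := h2

lemma deg_sum {L R : Type} [Fintype L] [Fintype R] [DecidableEq L] [DecidableEq R]
    (E : Finset (L × R)) :
    E.card = ∑ r : R, (univ.filter fun ℓ : L => (ℓ, r) ∈ E).card := by
  rw [Finset.card_eq_sum_card_fiberwise (f := Prod.snd) (t := univ) (fun x _ => mem_univ _)]
  refine Finset.sum_congr rfl fun r _ => ?_
  apply Finset.card_bij (fun p _ => p.1)
  · intro p hp
    simp only [mem_filter] at hp ⊢
    exact ⟨mem_univ _, by rw [← hp.2]; exact hp.1⟩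
  · intro p hp q hq h
    simp only [mem_filter] at hp hq
    exact Prod.ext h (hp.2.trans hq.2.symm)
  · intro ℓ hℓ
    simp only [mem_filter, mem_univ, true_and] at hℓ
    exact ⟨(ℓ, r), by simp [hℓ], rfl⟩

lemma sq_id {L R : Type} [Fintype L] [Fintype R] [DecidableEq L] [DecidableEq R]
    (E : Finset (L × R)) :
    ∑ r : R, (univ.filter fun ℓ : L => (ℓ, r) ∈ E).card *
        (univ.filter fun ℓ : L => (ℓ, r) ∈ E).card =
      ∑ p : L × L, (univ.filter fun r : R => (p.1, r) ∈ E ∧ (p.2, r) ∈ E).card := by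
  have h1 : ∀ r : R, (univ.filter fun ℓ : L => (ℓ, r) ∈ E).card *
      (univ.filter fun ℓ : L => (ℓ, r) ∈ E).card =
      ∑ ℓ : L, ∑ ℓ' : L, if (ℓ, r) ∈ E ∧ (ℓ', r) ∈ E then 1 else 0 := by
    intro r
    rw [Finset.card_filter, Finset.sum_mul_sum]
    refine Finset.sum_congr rfl fun ℓ _ => Finset.sum_congr rfl fun ℓ' _ => ?_
    by_cases h1 : (ℓ, r) ∈ E <;> by_cases h2 : (ℓ', r) ∈ E <;> simp [h1, h2]
  simp only [Fintype.sum_prod_type]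
  calc ∑ r : R, (univ.filter fun ℓ : L => (ℓ, r) ∈ E).card *
        (univ.filter fun ℓ : L => (ℓ, r) ∈ E).card
      = ∑ r : R, ∑ ℓ : L, ∑ ℓ' : L, if (ℓ, r) ∈ E ∧ (ℓ', r) ∈ E then 1 else 0 :=
        Finset.sum_congr rfl fun r _ => h1 r
    _ = ∑ ℓ : L, ∑ r : R, ∑ ℓ' : L, (if (ℓ, r) ∈ E ∧ (ℓ', r) ∈ E then 1 else 0) :=
        Finset.sum_comm
    _ = ∑ ℓ : L, ∑ ℓ' : L, ∑ r : R, (if (ℓ, r) ∈ E ∧ (ℓ', r) ∈ E then 1 else 0) :=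
        Finset.sum_congr rfl fun ℓ _ => Finset.sum_comm
    _ = ∑ ℓ : L, ∑ ℓ' : L, (univ.filter fun r : R => (ℓ, r) ∈ E ∧ (ℓ', r) ∈ E).card := by
        refine Finset.sum_congr rfl fun ℓ _ => Finset.sum_congr rfl fun ℓ' _ => ?_
        rw [Finset.card_filter]

set_option maxHeartbeats 2000000 in
theorem stmt_2 : ∃ N : ℕ, ∀ n : ℕ, N ≤ n → ∀ (δ : ℝ), δ < 0.1 →
    ∀ {R : Type} [Fintype R] [DecidableEq R] (E : Finset ((Fin n → Bool) × R)),
    (2:ℝ)^n * (Fintype.card R) * (2:ℝ) ^ (-(δ * n)) ≤ (E.card : ℝ) →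
    ∃ ℓ ℓ' : Fin n → Bool, 0.1 * (n:ℝ) ≤ (hammingDist ℓ ℓ' : ℝ) ∧
      (Fintype.card R : ℝ) * (2:ℝ) ^ (-(2*δ*(n:ℝ)) - 2) ≤
        ((Finset.univ.filter (fun r => (ℓ, r) ∈ E) ∩
          Finset.univ.filter (fun r => (ℓ', r) ∈ E)).card : ℝ) := by
  refine ⟨10, ?_⟩
  intro n hn δ hδ R _ _ E hE
  have hn' : (10:ℝ) ≤ (n:ℝ) := by exact_mod_cast hn
  by_cases hR0 : Fintype.card R = 0
  · refine ⟨fun _ => false, fun _ => true, ?_, ?_⟩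
    · have hd : hammingDist (fun _ => false : Fin n → Bool) (fun _ => true) = n := by
        simp [hammingDist]
      rw [hd]
      linarith
    · rw [hR0]
      push_cast
      simp
  have hRpos : (0:ℝ) < (Fintype.card R : ℝ) := by
    exact_mod_cast Nat.pos_of_ne_zero hR0
  by_contra hcon
  push_neg at hcon
  -- abbreviations
  set cR : ℝ := (Fintype.card R : ℝ) with hcR
  set u : ℝ := (2:ℝ) ^ (-(δ * (n:ℝ))) with hu
  set P2 : ℝ := (2:ℝ) ^ (n:ℕ) with hP2
  have hP2pos : (0:ℝ) < P2 := by positivity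
  have hupos : (0:ℝ) < u := Real.rpow_pos_of_pos two_pos _
  set Bnd : ℝ := (2:ℝ) ^ ((0.1:ℝ) * n) * (3/2) ^ n with hBnd
  set d : R → ℕ := fun r => (univ.filter fun ℓ : Fin n → Bool => (ℓ, r) ∈ E).card with hd
  set c : ((Fin n → Bool) × (Fin n → Bool)) → ℕ := fun p =>
    ((univ.filter fun r : R => (p.1, r) ∈ E) ∩ (univ.filter fun r : R => (p.2, r) ∈ E)).card
    with hc
  set T : ℝ := cR * (2:ℝ) ^ (-(2*δ*(n:ℝ)) - 2) with hT
  -- hcon : far pairs have small codegree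
  -- Cauchy-Schwarz
  have hCS : ((E.card : ℝ))^2 ≤ cR * ∑ r : R, (d r : ℝ)^2 := by
    have h := sq_sum_le_card_mul_sum_sq (s := (univ : Finset R)) (f := fun r => (d r : ℝ))
    have hEd : (E.card : ℝ) = ∑ r : R, (d r : ℝ) := by
      rw [deg_sum E]; push_cast; rfl
    rw [hEd]
    simpa [card_univ] using h
  -- identity
  have hId : ∑ r : R, (d r : ℝ)^2 = ∑ p : (Fin n → Bool) × (Fin n → Bool), (c p : ℝ) := by
    have h := sq_id E
    have : ∀ p : (Fin n → Bool) × (Fin n → Bool),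
        c p = (univ.filter fun r : R => (p.1, r) ∈ E ∧ (p.2, r) ∈ E).card := by
      intro p; rw [hc]; rw [Finset.filter_and]
    simp only [this]
    rw [← Nat.cast_sum, ← h]
    push_cast [sq]
    rfl
  -- split into far and close pairs
  set far := univ.filter fun p : (Fin n → Bool) × (Fin n → Bool) =>
    (0.1:ℝ) * n ≤ (hammingDist p.1 p.2 : ℝ) with hfar
  set close := univ.filter fun p : (Fin n → Bool) × (Fin n → Bool) =>
    ¬ ((0.1:ℝ) * n ≤ (hammingDist p.1 p.2 : ℝ)) with hclose
  have hsplit : ∑ p : (Fin n → Bool) × (Fin n → Bool), (c p : ℝ) =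
      (∑ p ∈ far, (c p : ℝ)) + ∑ p ∈ close, (c p : ℝ) :=
    (Finset.sum_filter_add_sum_filter_not univ _ _).symm
  have hTpos : (0:ℝ) ≤ T := by
    rw [hT]; positivity
  -- far bound
  have hfarbound : ∑ p ∈ far, (c p : ℝ) ≤ P2 * P2 * T := by
    calc ∑ p ∈ far, (c p : ℝ) ≤ far.card • T := by
          apply Finset.sum_le_card_nsmul
          intro p hp
          simp only [hfar, mem_filter, mem_univ, true_and] at hp
          exact le_of_lt (hcon p.1 p.2 hp)
      _ = (far.card : ℝ) * T := by rw [nsmul_eq_mul]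
      _ ≤ P2 * P2 * T := by
          apply mul_le_mul_of_nonneg_right _ hTpos
          have h1 : far.card ≤ Fintype.card ((Fin n → Bool) × (Fin n → Bool)) := by
            rw [← Finset.card_univ]
            exact Finset.card_filter_le _ _
          have h2 : Fintype.card ((Fin n → Bool) × (Fin n → Bool)) = 2^n * 2^n := by
            simp [Fintype.card_prod, Fintype.card_fun]
          calc (far.card : ℝ) ≤ ((2^n * 2^n : ℕ) : ℝ) := by exact_mod_cast h1.trans_eq h2
            _ = P2 * P2 := by push_cast; rw [hP2]
  -- close bound
  have hcb : ∀ p, (c p : ℝ) ≤ cR := by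
    intro p
    have h : c p ≤ Fintype.card R := by
      rw [hc]
      calc ((univ.filter fun r : R => (p.1, r) ∈ E) ∩
            (univ.filter fun r : R => (p.2, r) ∈ E)).card
          ≤ (univ.filter fun r : R => (p.1, r) ∈ E).card :=
            Finset.card_le_card Finset.inter_subset_left
        _ ≤ (univ : Finset R).card := Finset.card_filter_le _ _
        _ = Fintype.card R := Finset.card_univ
    rw [hcR]
    exact_mod_cast h
  have hclosecard : (close.card : ℝ) ≤ P2 * Bnd := by
    have h1 : close.card = ∑ ℓ : Fin n → Bool, (close.filter fun p => p.1 = ℓ).card :=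
      Finset.card_eq_sum_card_fiberwise (fun x _ => mem_univ _)
    have h2 : ∀ ℓ : Fin n → Bool, ((close.filter fun p => p.1 = ℓ).card : ℝ) ≤ Bnd := by
      intro ℓ
      have hle : (close.filter fun p => p.1 = ℓ).card ≤
          (univ.filter fun ℓ' : Fin n → Bool =>
            ¬ ((0.1:ℝ) * n ≤ (hammingDist ℓ ℓ' : ℝ))).card := by
        apply Finset.card_le_card_of_injOn (fun p => p.2)
        · intro p hp
          rw [Finset.mem_coe, Finset.mem_filter] at hp
          obtain ⟨hp1, hp2⟩ := hp
          rw [hclose, Finset.mem_filter] at hp1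
          rw [Finset.mem_coe, Finset.mem_filter]
          refine ⟨mem_univ _, ?_⟩
          rw [← hp2]
          exact hp1.2
        · intro p hp q hq h
          rw [Finset.mem_coe, Finset.mem_filter] at hp hq
          exact Prod.ext (hp.2.trans hq.2.symm) h
      calc ((close.filter fun p => p.1 = ℓ).card : ℝ) ≤ _ := by exact_mod_cast hle
        _ ≤ Bnd := ball_bound n ℓ
    calc (close.card : ℝ) = ∑ ℓ : Fin n → Bool, ((close.filter fun p => p.1 = ℓ).card : ℝ) := by
          rw [h1]; push_cast; rfl
      _ ≤ ∑ _ℓ : Fin n → Bool, Bnd := Finset.sum_le_sum fun ℓ _ => h2 ℓ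
      _ = P2 * Bnd := by
          rw [Finset.sum_const, card_univ, Fintype.card_fun, nsmul_eq_mul, hP2]
          push_cast [Fintype.card_fin, Fintype.card_bool]
          ring
  have hclosebound : ∑ p ∈ close, (c p : ℝ) ≤ (P2 * Bnd) * cR := by
    calc ∑ p ∈ close, (c p : ℝ) ≤ ∑ _p ∈ close, cR := Finset.sum_le_sum fun p _ => hcb p
      _ = (close.card : ℝ) * cR := by rw [Finset.sum_const, nsmul_eq_mul]
      _ ≤ (P2 * Bnd) * cR := mul_le_mul_of_nonneg_right hclosecard (le_of_lt hRpos)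
  -- combine
  have hA : P2 * cR * u ≤ (E.card : ℝ) := hE
  have hA0 : (0:ℝ) ≤ P2 * cR * u := by positivity
  have hmain : (P2 * cR * u)^2 ≤ cR * (P2 * P2 * T + (P2 * Bnd) * cR) := by
    calc (P2 * cR * u)^2 ≤ ((E.card : ℝ))^2 := by
          apply pow_le_pow_left₀ hA0 hA
      _ ≤ cR * ∑ r : R, (d r : ℝ)^2 := hCS
      _ = cR * ((∑ p ∈ far, (c p : ℝ)) + ∑ p ∈ close, (c p : ℝ)) := by rw [hId, hsplit]
      _ ≤ cR * (P2 * P2 * T + (P2 * Bnd) * cR) := by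
          apply mul_le_mul_of_nonneg_left _ (le_of_lt hRpos)
          exact add_le_add hfarbound hclosebound
  -- rewrite T
  have hTval : T = cR * (u * u / 4) := by
    rw [hT, hu]
    congr 1
    rw [← Real.rpow_add two_pos]
    rw [show (-(δ * (n:ℝ)) + -(δ * (n:ℝ))) = (-(2*δ*(n:ℝ)) - 2) + 2 by ring]
    rw [Real.rpow_add two_pos]
    rw [show ((2:ℝ) ^ (2:ℝ)) = 4 by
      rw [show ((2:ℝ)) = ((2:ℕ):ℝ) by norm_num, Real.rpow_natCast]; norm_num]
    ring
  rw [hTval] at hmain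
  -- cancel cR^2
  have h2 : P2 * P2 * (u * u) ≤ P2 * P2 * (u * u) / 4 + P2 * Bnd := by
    have hsq : cR^2 * (P2 * P2 * (u * u)) ≤ cR^2 * (P2 * P2 * (u * u) / 4 + P2 * Bnd) := by
      have hl : (P2 * cR * u)^2 = cR^2 * (P2 * P2 * (u * u)) := by ring
      have hr : cR * (P2 * P2 * (cR * (u * u / 4)) + (P2 * Bnd) * cR) =
          cR^2 * (P2 * P2 * (u * u) / 4 + P2 * Bnd) := by ring
      rw [← hl, ← hr]
      exact hmain
    have hcR2 : (0:ℝ) < cR^2 := by positivity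
    exact le_of_mul_le_mul_left hsq hcR2
  have h3 : (3/4) * (P2 * (u * u)) ≤ Bnd := by
    have h4 : P2 * ((3/4) * (P2 * (u * u))) ≤ P2 * Bnd := by
      have he : P2 * ((3/4) * (P2 * (u * u))) = P2 * P2 * (u * u) - P2 * P2 * (u * u) / 4 := by
        ring
      rw [he]
      linarith
    exact le_of_mul_le_mul_left h4 hP2pos
  -- numeric contradiction
  have e1 : P2 * (u * u) = (2:ℝ) ^ (((1:ℝ) - 2*δ) * n) := by
    rw [hP2, hu, ← Real.rpow_natCast 2 n, ← Real.rpow_add two_pos, ← Real.rpow_add two_pos]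
    congr 1
    ring
  have e2 : (2:ℝ) ^ ((0.8:ℝ) * n) ≤ (2:ℝ) ^ (((1:ℝ) - 2*δ) * n) := by
    apply Real.rpow_le_rpow_of_exponent_le one_le_two
    nlinarith [Nat.cast_nonneg (α := ℝ) n]
  have h32 : (3/2 : ℝ) < (2:ℝ) ^ ((0.6:ℝ)) := by
    have h5 : ((3/2:ℝ))^(5:ℕ) < ((2:ℝ) ^ ((0.6:ℝ)))^(5:ℕ) := by
      rw [← Real.rpow_natCast ((2:ℝ) ^ ((0.6:ℝ))) 5, ← Real.rpow_mul (by norm_num)]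
      norm_num
    by_contra hcon'
    push_neg at hcon'
    have := pow_le_pow_left₀ (by positivity) hcon' 5
    linarith
  have hn0 : n ≠ 0 := by omega
  have e3 : Bnd < (2:ℝ) ^ ((0.7:ℝ) * n) := by
    rw [hBnd]
    have hlt : ((3:ℝ)/2)^n < ((2:ℝ) ^ ((0.6:ℝ)))^n :=
      pow_lt_pow_left₀ h32 (by norm_num) hn0
    have heq : ((2:ℝ) ^ ((0.6:ℝ)))^n = (2:ℝ) ^ ((0.6:ℝ) * n) := by
      rw [← Real.rpow_natCast ((2:ℝ) ^ ((0.6:ℝ))) n, ← Real.rpow_mul (by norm_num)]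
    calc (2:ℝ) ^ ((0.1:ℝ) * n) * (3/2) ^ n < (2:ℝ) ^ ((0.1:ℝ) * n) * (2:ℝ) ^ ((0.6:ℝ) * n) := by
          apply mul_lt_mul_of_pos_left _ (by positivity)
          rw [← heq]; exact hlt
      _ = (2:ℝ) ^ ((0.7:ℝ) * n) := by
          rw [← Real.rpow_add two_pos]; congr 1; ring
  have e4 : (2:ℝ) ^ ((0.7:ℝ) * n) ≤ (3/4) * (2:ℝ) ^ ((0.8:ℝ) * n) := by
    have hsplit2 : (2:ℝ) ^ ((0.8:ℝ) * n) = (2:ℝ) ^ ((0.7:ℝ) * n) * (2:ℝ) ^ ((0.1:ℝ) * n) := by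
      rw [← Real.rpow_add two_pos]; congr 1; ring
    have h2le : (2:ℝ) ≤ (2:ℝ) ^ ((0.1:ℝ) * n) := by
      calc (2:ℝ) = (2:ℝ) ^ (1:ℝ) := (Real.rpow_one 2).symm
        _ ≤ (2:ℝ) ^ ((0.1:ℝ) * n) := by
            apply Real.rpow_le_rpow_of_exponent_le one_le_two
            linarith
    rw [hsplit2]
    have ha : (0:ℝ) < (2:ℝ) ^ ((0.7:ℝ) * n) := Real.rpow_pos_of_pos two_pos _
    have h := mul_le_mul_of_nonneg_left h2le (le_of_lt ha)
    linarith
  have : Bnd < (3/4) * (P2 * (u * u)) := by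
    rw [e1]
    calc Bnd < (2:ℝ) ^ ((0.7:ℝ) * n) := e3
      _ ≤ (3/4) * (2:ℝ) ^ ((0.8:ℝ) * n) := e4
      _ ≤ (3/4) * (2:ℝ) ^ (((1:ℝ) - 2*δ) * n) := by linarith [e2]
  linarith
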